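/- Under the hypotheses of Theorem 2 (q = c(x p_y − y p_x) with p homogeneous of degree k, H(x,y) = q(x,y) h(x²+y², p(x,y))), every solution ρ(θ) of dρ/dθ = c ρ^{k+1} h(ρ², ρ^k f(θ)) f'(θ) with sufficiently small initial value ρ(0) > 0 satisfies ρ(2π) = ρ(0); hence the origin is a center of ẋ = −y + x H(x,y), ẏ = x + y H(x,y). -/

import Mathlib

open Real MvPolynomial Set Metric NNReal

lemma contDiff_eval_pair {X : Type*} [NormedAddCommGroup X] [NormedSpace ℝ X]
    (P : MvPolynomial (Fin 2) ℝ) {u v : X → ℝ} (hu : ContDiff ℝ ⊤ u) (hv : ContDiff ℝ ⊤ v) :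
    ContDiff ℝ ⊤ (fun x => eval ![u x, v x] P) := by
  induction P using MvPolynomial.induction_on with
  | C a => simpa using contDiff_const
  | add p q hp hq => simpa [eval_add] using hp.add hq
  | mul_X p n hp =>
    simp only [eval_mul, eval_X]
    refine hp.mul ?_
    fin_cases n
    · simpa using hu
    · simpa using hv

lemma exists_lipschitzOnWith_of_contDiff {F : ℝ × ℝ → ℝ} (hF : ContDiff ℝ ⊤ F)
    {s : Set (ℝ × ℝ)} (hs : IsCompact s) (hc : Convex ℝ s) :
    ∃ K : ℝ≥0, LipschitzOnWith K F s := by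
  obtain ⟨C, hC⟩ := hs.exists_bound_of_continuousOn ((hF.continuous_fderiv (by simp)).continuousOn)
  refine ⟨(⟨max C 0, le_max_right _ _⟩ : ℝ≥0),
    hc.lipschitzOnWith_of_nnnorm_fderiv_le
      (fun x _ => (hF.differentiable (by simp)).differentiableAt) (fun x hx => ?_)⟩
  refine NNReal.coe_le_coe.mp ?_
  simp only [coe_nnnorm, NNReal.coe_mk]
  exact (hC x hx).trans (le_max_left _ _)

lemma lipschitzOnWith_slice {F : ℝ × ℝ → ℝ} {K : ℝ≥0} {s₁ A : Set ℝ} {t : ℝ}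
    (hF : LipschitzOnWith K F (s₁ ×ˢ A)) (ht : t ∈ s₁) :
    LipschitzOnWith K (fun R => F (t, R)) A := by
  intro x hx y hy
  simpa [Prod.edist_eq] using hF (Set.mk_mem_prod ht hx) (Set.mk_mem_prod ht hy)

lemma bdd_of_periodic {g : ℝ → ℝ} (hg : Continuous g) (hper : Function.Periodic g (2 * π)) :
    ∃ D, 0 ≤ D ∧ ∀ x, |g x| ≤ D := by
  obtain ⟨C, hC⟩ := isCompact_Icc.exists_bound_of_continuousOn
    (hg.continuousOn (s := Icc 0 (2 * π)))
  refine ⟨max C 0, le_max_right _ _, fun x => ?_⟩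
  obtain ⟨y, hy, hxy⟩ := hper.exists_mem_Ico₀ (by positivity) x
  rw [hxy]
  exact (hC y (Ico_subset_Icc_self hy)).trans (le_max_left _ _)

theorem stmt16 (k : ℕ) (c : ℝ)
    (p : MvPolynomial (Fin 2) ℝ) (hp : p.IsHomogeneous k)
    (h : MvPolynomial (Fin 2) ℝ)
    (f : ℝ → ℝ) (hf : ∀ θ, f θ = eval ![cos θ, sin θ] p) :
    ∃ ε > 0, ∀ ρ₀ : ℝ, 0 < ρ₀ → ρ₀ < ε →
      ∀ ρ : ℝ → ℝ, ρ 0 = ρ₀ →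
        (∀ θ ∈ Set.Icc (0:ℝ) (2 * π),
          HasDerivAt ρ
            (c * ρ θ ^ (k + 1) * eval ![ρ θ ^ 2, ρ θ ^ k * f θ] h * deriv f θ) θ) →
        ρ (2 * π) = ρ 0 := by
  have hπ : (0:ℝ) < 2 * π := by positivity
  -- basic facts about f
  have hfc : ContDiff ℝ ⊤ f := by
    have : f = fun θ => eval ![cos θ, sin θ] p := funext hf
    rw [this]
    exact contDiff_eval_pair p contDiff_cos contDiff_sin
  have hper : Function.Periodic f (2 * π) := by
    intro x
    rw [hf, hf]
    simp [cos_add_two_pi, sin_add_two_pi]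
  rcases Nat.eq_zero_or_pos k with hk | hk
  · -- k = 0 : f is constant, so the RHS vanishes
    subst hk
    have hconst : ∀ θ, f θ = f 0 := by
      intro θ
      rw [hf θ, hf 0, eval_eq, eval_eq]
      refine Finset.sum_congr rfl fun m hm => ?_
      have hm0 : ∀ x, m x = 0 :=
        (totalDegree_eq_zero_iff (Fin 2) p).mp ((totalDegree_zero_iff_isHomogeneous (Fin 2)).mpr hp) m hm
      simp [hm0]
    have hderiv0 : deriv f = fun _ => 0 := by
      have : f = fun _ => f 0 := funext hconst
      rw [this]
      funext x
      exact deriv_const x (f 0)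
    refine ⟨1, one_pos, fun ρ₀ hρ₀ hρ₀ε ρ hρ0 hρd => ?_⟩
    have hcont : ContinuousOn ρ (Icc 0 (2 * π)) := fun θ hθ =>
      (hρd θ hθ).continuousAt.continuousWithinAt
    have hρd' : ∀ x ∈ Ioo (0:ℝ) (2 * π), HasDerivAt ρ ((fun _ => (0:ℝ)) x) x := by
      intro x hx
      have := hρd x (Ioo_subset_Icc_self hx)
      rw [hderiv0] at this
      simpa using this
    obtain ⟨x, _, hx⟩ := exists_hasDerivAt_eq_slope ρ (fun _ => (0:ℝ)) hπ hcont hρd'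
    have : ρ (2 * π) - ρ 0 = 0 := by
      field_simp at hx
      linarith [hx]
    linarith
  · -- k ≥ 1
    set W : ℝ × ℝ → ℝ := fun z => c * z.2 ^ (k + 1) * eval ![z.2 ^ 2, z.2 ^ k * z.1] h with hWdef
    have hW : ContDiff ℝ ⊤ W := by
      apply ContDiff.mul
      · exact contDiff_const.mul (contDiff_snd.pow _)
      · exact contDiff_eval_pair h (contDiff_snd.pow 2) ((contDiff_snd.pow k).mul contDiff_fst)
    obtain ⟨B₀, hB₀0, hB₀⟩ := bdd_of_periodic hfc.continuous hper
    have hderivper : Function.Periodic (deriv f) (2 * π) := by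
      intro x
      have hshift : (fun y => f (y + 2 * π)) = f := funext fun y => hper y
      calc deriv f (x + 2 * π) = deriv (fun y => f (y + 2 * π)) x :=
            (deriv_comp_add_const f (2 * π) x).symm
        _ = deriv f x := by rw [hshift]
    obtain ⟨D, hD0, hD⟩ := bdd_of_periodic (hfc.continuous_deriv le_top) hderivper
    set B : ℝ := B₀ + 1 with hBdef
    have hB0 : 0 < B := by linarith
    have hfB : ∀ x, f x ∈ Icc (-B) B := fun x => by
      have := abs_le.mp (hB₀ x); constructor <;> [linarith; linarith]
    obtain ⟨Mh, hMh⟩ := (((isCompact_Icc (a := (-1:ℝ)) (b := 1)).prod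
        (isCompact_Icc (a := -B) (b := B)))).exists_bound_of_continuousOn
      (contDiff_eval_pair h contDiff_fst contDiff_snd).continuous.continuousOn
    have hmem00 : ((0:ℝ), (0:ℝ)) ∈ Icc (-1:ℝ) 1 ×ˢ Icc (-B) B := by
      constructor
      · simp only [mem_Icc]; norm_num
      · simp only [mem_Icc]
        constructor <;> [linarith; linarith]
    have hMh0 : (0:ℝ) ≤ Mh := le_trans (norm_nonneg _) (hMh (0, 0) hmem00)
    obtain ⟨K₁, hK₁⟩ := exists_lipschitzOnWith_of_contDiff hW
      ((isCompact_Icc (a := -B) (b := B)).prod (isCompact_Icc (a := (-1:ℝ)) (b := 1)))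
      ((convex_Icc _ _).prod (convex_Icc _ _))
    refine ⟨min (1/2) (1 / (1 + |c| * 2 ^ (k + 2) * Mh * B)), ?_, fun ρ₀ hρ₀ hρ₀ε ρ hρ0 hρd => ?_⟩
    · have : (0:ℝ) < 1 + |c| * 2 ^ (k + 2) * Mh * B := by positivity
      positivity
    have hρ₀half : ρ₀ ≤ 1 / 2 := le_of_lt (lt_of_lt_of_le hρ₀ε (min_le_left _ _))
    have hρ₀1 : ρ₀ ≤ 1 := by linarith
    have hden : (0:ℝ) < 1 + |c| * 2 ^ (k + 2) * Mh * B := by positivity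
    have hρ₀X : ρ₀ * (|c| * 2 ^ (k + 2) * Mh * B) ≤ 1 := by
      have h1 : ρ₀ ≤ 1 / (1 + |c| * 2 ^ (k + 2) * Mh * B) :=
        le_of_lt (lt_of_lt_of_le hρ₀ε (min_le_right _ _))
      have h2 : ρ₀ * (1 + |c| * 2 ^ (k + 2) * Mh * B) ≤ 1 := (le_div_iff₀ hden).mp h1
      nlinarith [hρ₀]
    have hball : closedBall ρ₀ ρ₀ ⊆ Icc (-1:ℝ) 1 := by
      rw [Real.closedBall_eq_Icc]
      intro x hx
      simp only [mem_Icc] at *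
      constructor <;> linarith [hx.1, hx.2]
    have hballval : ∀ x ∈ closedBall ρ₀ ρ₀, 0 ≤ x ∧ x ≤ 2 * ρ₀ := by
      intro x hx
      rw [Real.closedBall_eq_Icc, mem_Icc] at hx
      constructor <;> linarith [hx.1, hx.2]
    have hpl : IsPicardLindelof (fun s R => W (s, R)) (tmin := -B) (tmax := B) ⟨f 0, hfB 0⟩ ρ₀
        (⟨ρ₀, le_of_lt hρ₀⟩ : ℝ≥0) 0 (⟨|c| * (2 * ρ₀) ^ (k + 1) * Mh, by positivity⟩ : ℝ≥0) K₁ := by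
      constructor
      · exact fun t ht => (lipschitzOnWith_slice hK₁ ht).mono hball
      · exact fun x hx => (hW.continuous.comp (continuous_id.prodMk continuous_const)).continuousOn
      · intro t ht x hx
        obtain ⟨hx0, hx2⟩ := hballval x hx
        have hx1 : |x| ≤ 1 := by rw [abs_of_nonneg hx0]; linarith
        have hxsq : x ^ 2 ∈ Icc (-1:ℝ) 1 := by
          constructor
          · nlinarith
          · nlinarith [abs_nonneg x, sq_abs x]
        have hxkt : x ^ k * t ∈ Icc (-B) B := by
          have h1 : |x ^ k * t| ≤ B := by
            rw [abs_mul, abs_pow]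
            calc |x| ^ k * |t| ≤ 1 ^ k * B := by
                  apply mul_le_mul (pow_le_pow_left₀ (abs_nonneg x) hx1 k) (abs_le.mpr ht)
                    (abs_nonneg t) (by norm_num)
              _ = B := by ring
          exact abs_le.mp h1
        have heval : |eval ![x ^ 2, x ^ k * t] h| ≤ Mh := by
          simpa using hMh (x ^ 2, x ^ k * t) ⟨hxsq, hxkt⟩
        have hxk1 : |x| ^ (k + 1) ≤ (2 * ρ₀) ^ (k + 1) :=
          pow_le_pow_left₀ (abs_nonneg x) (by rw [abs_of_nonneg hx0]; linarith) _
        simp only [hWdef]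
        rw [Real.norm_eq_abs, abs_mul, abs_mul, abs_pow]
        exact mul_le_mul (mul_le_mul le_rfl hxk1 (by positivity) (abs_nonneg c)) heval
          (abs_nonneg _) (by positivity)
      · -- C_mul_le_R
        rw [NNReal.coe_zero, sub_zero]
        show |c| * (2 * ρ₀) ^ (k + 1) * Mh * max (B - f 0) (f 0 - -B) ≤ ρ₀
        have hf0 := hfB 0
        simp only [mem_Icc] at hf0
        have hmax : max (B - f 0) (f 0 - -B) ≤ 2 * B :=
          max_le (by linarith [hf0.1]) (by linarith [hf0.2])
        have hpow : (2 * ρ₀) ^ (k + 1) ≤ 2 ^ (k + 1) * ρ₀ ^ 2 := by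
          rw [mul_pow]
          exact mul_le_mul_of_nonneg_left
            (pow_le_pow_of_le_one (le_of_lt hρ₀) hρ₀1 (by omega)) (by positivity)
        have e2 : |c| * (2 * ρ₀) ^ (k + 1) * Mh * (2 * B) ≤
            |c| * (2 ^ (k + 1) * ρ₀ ^ 2) * Mh * (2 * B) := by gcongr
        have e3 : |c| * (2 ^ (k + 1) * ρ₀ ^ 2) * Mh * (2 * B) =
            (ρ₀ * (|c| * 2 ^ (k + 2) * Mh * B)) * ρ₀ := by ring
        have e4 : (ρ₀ * (|c| * 2 ^ (k + 2) * Mh * B)) * ρ₀ ≤ 1 * ρ₀ :=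
          mul_le_mul_of_nonneg_right hρ₀X (le_of_lt hρ₀)
        calc |c| * (2 * ρ₀) ^ (k + 1) * Mh * max (B - f 0) (f 0 - -B)
            ≤ |c| * (2 * ρ₀) ^ (k + 1) * Mh * (2 * B) :=
              mul_le_mul_of_nonneg_left hmax (by positivity)
          _ ≤ ρ₀ := by rw [e3] at e2; linarith [e2, e4]
    obtain ⟨α, hα0, hαd⟩ := hpl.exists_eq_forall_mem_Icc_hasDerivWithinAt₀
    have hσd : ∀ θ : ℝ, HasDerivAt (fun θ => α (f θ)) (W (f θ, α (f θ)) * deriv f θ) θ := by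
      intro θ
      have hmem := hfB θ
      have habs := abs_le.mp (hB₀ θ)
      have hnb : Icc (-B) B ∈ nhds (f θ) :=
        Icc_mem_nhds (by simp only [hBdef]; linarith [habs.1]) (by simp only [hBdef]; linarith [habs.2])
      have h1 : HasDerivAt α (W (f θ, α (f θ))) (f θ) := (hαd (f θ) hmem).hasDerivAt hnb
      have h2 : HasDerivAt f (deriv f θ) θ := (hfc.differentiable (by simp) θ).hasDerivAt
      exact h1.comp θ h2
    have hρcont : ContinuousOn ρ (Icc 0 (2 * π)) := fun θ hθ =>
      (hρd θ hθ).continuousAt.continuousWithinAt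
    obtain ⟨A₁, hA₁⟩ := isCompact_Icc.exists_bound_of_continuousOn hρcont
    have hσcont : Continuous (fun θ => α (f θ)) :=
      continuous_iff_continuousAt.mpr fun θ => (hσd θ).continuousAt
    obtain ⟨A₂, hA₂⟩ := isCompact_Icc.exists_bound_of_continuousOn
      (hσcont.continuousOn (s := Icc 0 (2 * π)))
    set A : ℝ := max A₁ A₂ with hAdef
    obtain ⟨K₂, hK₂⟩ := exists_lipschitzOnWith_of_contDiff hW
      ((isCompact_Icc (a := -B) (b := B)).prod (isCompact_Icc (a := -A) (b := A)))
      ((convex_Icc _ _).prod (convex_Icc _ _))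
    have hv : ∀ t : ℝ, LipschitzOnWith (K₂ * D.toNNReal)
        (fun R => W (f t, R) * deriv f t) (Icc (-A) A) := by
      intro t
      rw [lipschitzOnWith_iff_dist_le_mul]
      intro x hx y hy
      have h1 : dist (W (f t, x)) (W (f t, y)) ≤ K₂ * dist x y :=
        (lipschitzOnWith_slice hK₂ (hfB t)).dist_le_mul x hx y hy
      have h2 : dist (W (f t, x) * deriv f t) (W (f t, y) * deriv f t) =
          dist (W (f t, x)) (W (f t, y)) * |deriv f t| := by
        simp only [Real.dist_eq]
        rw [← sub_mul, abs_mul]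
      have hcoe : ((K₂ * D.toNNReal : NNReal) : ℝ) = (K₂ : ℝ) * D := by
        push_cast [Real.coe_toNNReal D hD0]
        ring
      rw [h2, hcoe]
      calc dist (W (f t, x)) (W (f t, y)) * |deriv f t|
          ≤ (K₂ * dist x y) * D := by
            apply mul_le_mul h1 (hD t) (abs_nonneg _) (by positivity)
        _ = (K₂ : ℝ) * D * dist x y := by ring
    have hEq : Set.EqOn ρ (fun θ => α (f θ)) (Icc 0 (2 * π)) := by
      apply ODE_solution_unique_of_mem_Icc_right (fun t _ => hv t) hρcont
      · intro t ht
        exact (hρd t (Ico_subset_Icc_self ht)).hasDerivWithinAt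
      · intro t ht
        have := abs_le.mp ((hA₁ t (Ico_subset_Icc_self ht)).trans (le_max_left A₁ A₂))
        exact ⟨this.1, this.2⟩
      · exact hσcont.continuousOn
      · intro t ht
        exact (hσd t).hasDerivWithinAt
      · intro t ht
        have := abs_le.mp ((hA₂ t (Ico_subset_Icc_self ht)).trans (le_max_right A₁ A₂))
        exact ⟨this.1, this.2⟩
      · exact hρ0.trans hα0.symm
    have h2πmem : (2 * π) ∈ Icc (0:ℝ) (2 * π) := ⟨le_of_lt hπ, le_refl _⟩
    have hf2π : f (2 * π) = f 0 := by simpa using hper 0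
    calc ρ (2 * π) = α (f (2 * π)) := hEq h2πmem
      _ = α (f 0) := by rw [hf2π]
      _ = ρ₀ := hα0
      _ = ρ 0 := hρ0.symm
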